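/- Assume κ is h-admissible and normalized, and let μ ∈ 𝒫^ℓ_n(h). For a path s of length n, let det(s) be the path of length n + hℓ whose first hℓ steps are ε_1, ε_2, …, ε_{hℓ} (in this order) and whose remaining n steps are those of s. Then: (i) the distinguished path t^{det_h(μ)} equals det(t^μ); (ii) the map s ↦ det(s) is a bijection from {paths s of length n with s ∼ t^μ} onto {paths s' of length n + hℓ with s' ∼ t^{det_h(μ)}}; (iii) det shifts endpoints by det(s)(n+hℓ) = (1,1,…,1) + s(n); and (iv) det preserves degrees: deg(det(s)) = deg(s) for every path s with s ∼ t^μ. -/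

import Mathlib

namespace BC

/-- A node `(r, c, m)`: row `r ≥ 1`, column `c ≥ 1` (1-based), component `m` (0-based). -/
abbrev Node : Type := ℕ × ℕ × ℕ

/-- An `ℓ`-multipartition: `row m r` is the length of the `(r+1)`-st row of the
`(m+1)`-st component. -/
structure MultiPartition (ℓ : ℕ) : Type where
  row : ℕ → ℕ → ℕ
  antitone : ∀ m r, row m (r + 1) ≤ row m r
  comp_bound : ∀ m, ℓ ≤ m → ∀ r, row m r = 0
  row_finite : ∀ m, ∃ R, ∀ r, R ≤ r → row m r = 0

/-- The number of boxes of a multipartition. -/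
noncomputable def size {ℓ : ℕ} (lam : MultiPartition ℓ) : ℕ :=
  ∑ᶠ (m : ℕ), ∑ᶠ (r : ℕ), lam.row m r

/-- The Young diagram of a multipartition, as a set of nodes. -/
def diag {ℓ : ℕ} (lam : MultiPartition ℓ) : Set Node :=
  {b | 1 ≤ b.1 ∧ 1 ≤ b.2.1 ∧ b.2.1 ≤ lam.row b.2.2 (b.1 - 1)}

/-- The residue `κ_m + c - r` of a node. -/
def res (e : ℕ) (κ : ℕ → ZMod e) (b : Node) : ZMod e :=
  κ b.2.2 + (b.2.1 : ZMod e) - (b.1 : ZMod e)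

/-- The (integral part of the) real-line position of a node: `m + ℓ(r - c)` (with
1-based component index). -/
def thetaPos (ℓ : ℕ) (b : Node) : ℤ :=
  ((b.2.2 : ℤ) + 1) + (ℓ : ℤ) * ((b.1 : ℤ) - (b.2.1 : ℤ))

/-- `NodeDom ℓ b b'` means `b ▷_θ b'` (`b` θ-dominates `b'`; `b'` is to the right of `b`). -/
def NodeDom (ℓ : ℕ) (b b' : Node) : Prop :=
  thetaPos ℓ b < thetaPos ℓ b' ∨
    (thetaPos ℓ b = thetaPos ℓ b' ∧ b.1 + b.2.1 < b'.1 + b'.2.1)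

/-- A set of nodes is the Young diagram of some `ℓ`-multipartition. -/
def IsDiag (ℓ : ℕ) (D : Set Node) : Prop := ∃ lam : MultiPartition ℓ, diag lam = D

/-- `b` is a removable node of the diagram `D`. -/
def RemD (ℓ : ℕ) (D : Set Node) (b : Node) : Prop := b ∈ D ∧ IsDiag ℓ (D \ {b})

/-- `b` is an addable node (in one of the first `h` columns) of the diagram `D`. -/
def AddD (h ℓ : ℕ) (D : Set Node) (b : Node) : Prop :=
  1 ≤ b.2.1 ∧ b.2.1 ≤ h ∧ b ∉ D ∧ IsDiag ℓ (D ∪ {b})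

/-- All components of `lam` have at most `h` columns. -/
def HCols (h : ℕ) {ℓ : ℕ} (lam : MultiPartition ℓ) : Prop := ∀ m r, lam.row m r ≤ h

/-- `κ` is `h`-admissible: for every `i ∈ ℤ/eℤ` at most one component index `m < ℓ`
satisfies `κ m ∈ {i, i+1, …, i+h-1}`. -/
def HAdmissible (e h ℓ : ℕ) (κ : ℕ → ZMod e) : Prop :=
  ∀ (i : ZMod e) (m t : ℕ), m < ℓ → t < ℓ →
    (∃ d : ℕ, d < h ∧ κ m = i + (d : ZMod e)) →
    (∃ d : ℕ, d < h ∧ κ t = i + (d : ZMod e)) → m = t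

/-- `κ` is normalized: lifting to `{0, …, e-1}` one has `κ_1 < κ_2 < ⋯ < κ_ℓ` and
`κ_ℓ + h ≢ κ_1 (mod e)`. -/
def Normalized (e h ℓ : ℕ) (κ : ℕ → ZMod e) : Prop :=
  (∀ m t : ℕ, m < t → t < ℓ → (κ m).val < (κ t).val) ∧
    κ (ℓ - 1) + (h : ZMod e) ≠ κ 0

/-- The shift vector `ρ` (0-based index `a = h·(m-1) + (i-1)` gives `ρ_a = e - κ_m - i + 1`). -/
def rhoZ (e h : ℕ) (κ : ℕ → ZMod e) (a : ℕ) : ℤ :=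
  (e : ℤ) - ((κ (a / h)).val : ℤ) - ((a % h : ℕ) : ℤ)

/-- The pairing `⟨x + ρ, ε_i - ε_j⟩`. -/
def pairV (e h : ℕ) (κ : ℕ → ZMod e) (x : ℕ → ℝ) (i j : ℕ) : ℝ :=
  (x i + (rhoZ e h κ i : ℝ)) - (x j + (rhoZ e h κ j : ℝ))

/-- `x` lies on the hyperplane `E(ε_i - ε_j, re)`. -/
def OnWall (e h : ℕ) (κ : ℕ → ZMod e) (x : ℕ → ℝ) (i j : ℕ) (r : ℤ) : Prop :=
  pairV e h κ x i j = (r : ℝ) * (e : ℝ)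

/-- `x ∈ E^<(ε_i - ε_j, re)`: `⟨x+ρ,α⟩ - re` and `⟨ρ,α⟩ - re` are nonzero of the same sign. -/
def InLt (e h : ℕ) (κ : ℕ → ZMod e) (x : ℕ → ℝ) (i j : ℕ) (r : ℤ) : Prop :=
  0 < (pairV e h κ x i j - (r : ℝ) * (e : ℝ)) *
      (pairV e h κ (fun _ => 0) i j - (r : ℝ) * (e : ℝ))

/-- `x ∈ E^>(ε_i - ε_j, re)`: `⟨x+ρ,α⟩ - re` and `⟨ρ,α⟩ - re` are nonzero of opposite signs. -/
def InGt (e h : ℕ) (κ : ℕ → ZMod e) (x : ℕ → ℝ) (i j : ℕ) (r : ℤ) : Prop :=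
  (pairV e h κ x i j - (r : ℝ) * (e : ℝ)) *
      (pairV e h κ (fun _ => 0) i j - (r : ℝ) * (e : ℝ)) < 0

/-- The reflection `s_{ε_i - ε_j, re} · x = x - (⟨x+ρ,α⟩ - re) α`. -/
def reflV (e h : ℕ) (κ : ℕ → ZMod e) (i j : ℕ) (r : ℤ) (x : ℕ → ℝ) : ℕ → ℝ :=
  fun a => x a - (pairV e h κ x i j - (r : ℝ) * (e : ℝ)) *
    ((if a = i then (1 : ℝ) else 0) - (if a = j then (1 : ℝ) else 0))

-- The local degree contribution `d_{α,r}(x,y)` for `α = ε_i - ε_j`.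
open Classical in
noncomputable def dval (e h : ℕ) (κ : ℕ → ZMod e) (x y : ℕ → ℝ) (i j : ℕ) (r : ℤ) : ℤ :=
  if OnWall e h κ x i j r ∧ InLt e h κ y i j r then 1
  else if InGt e h κ x i j r ∧ OnWall e h κ y i j r then -1
  else 0

-- The degree `d(x, y) = Σ_{α ∈ Φ⁺, r ∈ ℤ} d_{α,r}(x,y)` of a single step.
open Classical in
noncomputable def stepDeg (e h ℓ : ℕ) (κ : ℕ → ZMod e) (x y : ℕ → ℝ) : ℤ :=
  ∑ i ∈ Finset.range (h * ℓ), ∑ j ∈ Finset.range (h * ℓ),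
    if i < j then ∑ᶠ r : ℤ, dval e h κ x y i j r else 0

/-- The `k`-th point `s(k) = ε_{s(1)} + ⋯ + ε_{s(k)}` of a path (with 0-based steps). -/
def pts (s : ℕ → ℕ) (k : ℕ) : ℕ → ℝ :=
  fun a => ((Finset.filter (fun i => s i = a) (Finset.range k)).card : ℝ)

/-- `s` is a (normalized) path of length `n` with steps among `ε_1, …, ε_N`. -/
def IsPath (N n : ℕ) (s : ℕ → ℕ) : Prop :=
  (∀ k, k < n → s k < N) ∧ (∀ k, n ≤ k → s k = 0)

/-- The degree of a path of length `n`. -/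
noncomputable def pathDeg (e h ℓ : ℕ) (κ : ℕ → ZMod e) (n : ℕ) (s : ℕ → ℕ) : ℤ :=
  ∑ k ∈ Finset.range n, stepDeg e h ℓ κ (pts s k) (pts s (k + 1))

/-- `t` is obtained from `s` by one reflection `s^k_{α,re}` (at a point of `s` lying
on the corresponding hyperplane). -/
def ReflStep (e h ℓ n : ℕ) (κ : ℕ → ZMod e) (s t : ℕ → ℕ) : Prop :=
  IsPath (h * ℓ) n s ∧ IsPath (h * ℓ) n t ∧
  ∃ (k i j : ℕ) (r : ℤ), 1 ≤ k ∧ k ≤ n ∧ i < j ∧ j < h * ℓ ∧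
    OnWall e h κ (pts s k) i j r ∧
    (∀ l, l ≤ k → pts t l = pts s l) ∧
    (∀ l, k ≤ l → l ≤ n → pts t l = reflV e h κ i j r (pts s l))

/-- `PathSim … s t` : the path `t` can be obtained from `s` by finitely many reflections,
i.e. `t ∼ s`. -/
def PathSim (e h ℓ n : ℕ) (κ : ℕ → ZMod e) (s t : ℕ → ℕ) : Prop :=
  Relation.ReflTransGen (ReflStep e h ℓ n κ) s t

/-- A path is dominant if all of its points lie in the (closed interior of the)
dominant Weyl chamber. -/
def DominantPath (e h ℓ n : ℕ) (κ : ℕ → ZMod e) (s : ℕ → ℕ) : Prop :=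
  ∀ k, k ≤ n → ∀ m i j, m < ℓ → i < j → j < h →
    0 < pairV e h κ (pts s k) (h * m + i) (h * m + j)

/-- The length of the `i`-th column (1-based) of the `(m+1)`-st component. -/
noncomputable def colLen {ℓ : ℕ} (lam : MultiPartition ℓ) (m i : ℕ) : ℕ :=
  Set.ncard {r : ℕ | i ≤ lam.row m r}

/-- The point `pt(λ) ∈ E` associated to a multipartition. -/
noncomputable def ptv (h : ℕ) {ℓ : ℕ} (lam : MultiPartition ℓ) : ℕ → ℝ :=
  fun a => (colLen lam (a / h) (a % h + 1) : ℝ)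

/-- The point of `E` associated to a Young diagram (as a set of nodes). -/
noncomputable def ptD (h : ℕ) (D : Set Node) : ℕ → ℝ :=
  fun a => (Set.ncard {r : ℕ | ((r + 1 : ℕ), ((a % h) + 1 : ℕ), (a / h : ℕ)) ∈ D} : ℝ)

/-- `X` is the least dominant removable node of `D`: it is removable and θ-dominated by
every other removable node. -/
def IsLeastRem (ℓ : ℕ) (D : Set Node) (X : Node) : Prop :=
  RemD ℓ D X ∧ ∀ Y, RemD ℓ D Y → Y ≠ X → NodeDom ℓ Y X

/-- The least dominant removable node of a diagram (chosen by `Classical.epsilon`). -/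
noncomputable def leastRem (ℓ : ℕ) (D : Set Node) : Node :=
  Classical.epsilon (IsLeastRem ℓ D)

/-- `PDiag ℓ D j` is the diagram `D` with its least dominant removable node removed `j`
times; for `D = [μ]` with `|μ| = n` this is `μ^{(n-j)}`. -/
noncomputable def PDiag (ℓ : ℕ) (D : Set Node) : ℕ → Set Node
  | 0 => D
  | j + 1 => PDiag ℓ D j \ {leastRem ℓ (PDiag ℓ D j)}

/-- The distinguished path `t^μ` of length `n`: its `k`-th step (0-based) is the basis
direction of the column of `X_{k+1}`, the least dominant removable node of `μ^{(k+1)}`. -/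
noncomputable def tPath (h ℓ n : ℕ) (μ : MultiPartition ℓ) : ℕ → ℕ :=
  fun k =>
    if k < n then
      h * (leastRem ℓ (PDiag ℓ (diag μ) (n - 1 - k))).2.2 +
        ((leastRem ℓ (PDiag ℓ (diag μ) (n - 1 - k))).2.1 - 1)
    else 0

/-- `u ↑_{α,re} v` : `u = s_{α,re}·v`, `u ∈ E^<(α,re)`, `v ∈ E^>(α,re)`. -/
def UpStep (e h ℓ : ℕ) (κ : ℕ → ZMod e) (u v : ℕ → ℝ) : Prop :=
  ∃ (i j : ℕ) (r : ℤ), i < j ∧ j < h * ℓ ∧ u = reflV e h κ i j r v ∧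
    InLt e h κ u i j r ∧ InGt e h κ v i j r

/-- The strong linkage order: `Up … u v` means `u ↑ v`. -/
def Up (e h ℓ : ℕ) (κ : ℕ → ZMod e) : (ℕ → ℝ) → (ℕ → ℝ) → Prop :=
  Relation.ReflTransGen (UpStep e h ℓ κ)

/-- The length `ℓ(v)`: the number of hyperplanes lying strictly between `v` and the
origin. -/
noncomputable def lenPt (e h ℓ : ℕ) (κ : ℕ → ZMod e) (v : ℕ → ℝ) : ℕ :=
  Set.ncard {p : ℕ × ℕ × ℤ | p.1 < p.2.1 ∧ p.2.1 < h * ℓ ∧ InGt e h κ v p.1 p.2.1 p.2.2}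

/-- The loading `I_{(r,c,m)} = m + ℓ(r-c) + (r+c)ε` of a node (with 1-based component). -/
def load (ℓ : ℕ) (ε : ℝ) (b : Node) : ℝ :=
  ((b.2.2 : ℝ) + 1) + (ℓ : ℝ) * ((b.1 : ℝ) - (b.2.1 : ℝ)) + ((b.1 : ℝ) + (b.2.1 : ℝ)) * ε

/-- `T` is a residue-respecting semistandard tableau of shape the diagram `D` and weight
the diagram `Dw`, normalized to vanish off `D`. -/
def IsSStd (e ℓ : ℕ) (κ : ℕ → ZMod e) (ε : ℝ) (D Dw : Set Node) (T : Node → ℝ) : Prop :=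
  Set.BijOn T D (load ℓ ε '' Dw) ∧
  (∀ b ∈ D, b.1 = 1 → b.2.1 = 1 → ((b.2.2 : ℝ) + 1) < T b) ∧
  (∀ b ∈ D, 2 ≤ b.1 → T (b.1 - 1, b.2.1, b.2.2) + (ℓ : ℝ) < T b) ∧
  (∀ b ∈ D, 2 ≤ b.2.1 → T (b.1, b.2.1 - 1, b.2.2) - (ℓ : ℝ) < T b) ∧
  (∀ b ∈ D, ∀ b' ∈ Dw, T b = load ℓ ε b' → res e κ b = res e κ b') ∧
  (∀ b, b ∉ D → T b = 0)

/-- The node `Y_{k+1}` of the tableau `T`: the node of the shape diagram whose entry is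
the loading of `X_{k+1}`. -/
noncomputable def Ynd (ℓ n : ℕ) (ε : ℝ) (Dlam Dmu : Set Node) (T : Node → ℝ) (k : ℕ) :
    Node :=
  Classical.epsilon (fun b : Node =>
    b ∈ Dlam ∧ T b = load ℓ ε (leastRem ℓ (PDiag ℓ Dmu (n - 1 - k))))

/-- The path `ω(T)` associated to a semistandard tableau. -/
noncomputable def omegaT (h ℓ n : ℕ) (ε : ℝ) (Dlam Dmu : Set Node) (T : Node → ℝ) :
    ℕ → ℕ :=
  fun k =>
    if k < n then
      h * (Ynd ℓ n ε Dlam Dmu T k).2.2 + ((Ynd ℓ n ε Dlam Dmu T k).2.1 - 1)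
    else 0

/-- The shape `λ^{(k)}` of the restriction of the tableau `T` to entries in `I_{μ^{(k)}}`. -/
noncomputable def LShape (ℓ n : ℕ) (ε : ℝ) (Dlam Dmu : Set Node) (T : Node → ℝ) (k : ℕ) :
    Set Node :=
  {b | b ∈ Dlam ∧ T b ∈ load ℓ ε '' PDiag ℓ Dmu (n - k)}

/-- The degree of a semistandard tableau, computed from its component word. -/
noncomputable def degT (e h ℓ n : ℕ) (κ : ℕ → ZMod e) (ε : ℝ) (Dlam Dmu : Set Node)
    (T : Node → ℝ) : ℤ :=
  ∑ k ∈ Finset.range n,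
    ((Set.ncard {A | AddD h ℓ (LShape ℓ n ε Dlam Dmu T k) A ∧
        res e κ A = res e κ (Ynd ℓ n ε Dlam Dmu T k) ∧
        NodeDom ℓ (Ynd ℓ n ε Dlam Dmu T k) A} : ℤ) -
      (Set.ncard {R | RemD ℓ (LShape ℓ n ε Dlam Dmu T k) R ∧
        res e κ R = res e κ (Ynd ℓ n ε Dlam Dmu T k) ∧
        NodeDom ℓ (Ynd ℓ n ε Dlam Dmu T k) R} : ℤ))

/-- The θ-dominance order on multipartitions: `ThetaDomMP e ℓ κ μ lam` means `μ ⊴_θ λ`. -/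
noncomputable def ThetaDomMP (e ℓ : ℕ) (κ : ℕ → ZMod e) (μ lam : MultiPartition ℓ) : Prop :=
  ∀ b ∈ diag μ,
    Set.ncard {b' | b' ∈ diag μ ∧ res e κ b' = res e κ b ∧ NodeDom ℓ b' b} ≤
      Set.ncard {b' | b' ∈ diag lam ∧ res e κ b' = res e κ b ∧ NodeDom ℓ b' b}

/-- The multipartition `det_h(λ)`, obtained by prepending a row of length `h` to each
component. -/
def detMP (h : ℕ) {ℓ : ℕ} (lam : MultiPartition ℓ) (hc : HCols h lam) : MultiPartition ℓ where
  row m r := if m < ℓ then (if r = 0 then h else lam.row m (r - 1)) else 0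
  antitone m r := by
    by_cases hm : m < ℓ
    · by_cases hr : r = 0
      · subst hr
        simpa [hm] using hc m 0
      · have h2 : r - 1 + 1 = r := Nat.succ_pred_eq_of_pos (Nat.pos_of_ne_zero hr)
        have h3 := lam.antitone m (r - 1)
        rw [h2] at h3
        simpa [hm, hr] using h3
    · simp [hm]
  comp_bound m hm r := by simp [Nat.not_lt.mpr hm]
  row_finite m := by
    obtain ⟨R, hR⟩ := lam.row_finite m
    refine ⟨R + 1, fun r hr => ?_⟩
    by_cases hm : m < ℓ
    · have hr0 : r ≠ 0 := by omega
      simp only [hm, if_true, hr0, if_false]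
      exact hR (r - 1) (by omega)
    · simp [hm]

/-- The path `det(s)`: first the `N = hℓ` steps `ε_1, …, ε_{hℓ}`, then the steps of `s`. -/
def detPath (N n : ℕ) (s : ℕ → ℕ) : ℕ → ℕ :=
  fun k => if k < N then k else if k < N + n then s (k - N) else 0


section Aux

lemma nodeDom_asymm {ℓ : ℕ} {b b' : Node} (h1 : NodeDom ℓ b b') (h2 : NodeDom ℓ b' b) : False := by
  rcases h1 with h1 | ⟨h1, h1'⟩ <;> rcases h2 with h2 | ⟨h2, h2'⟩ <;> omega

lemma node_eq_of_theta {ℓ : ℕ} {b b' : Node} (hb : b.2.2 < ℓ) (hb' : b'.2.2 < ℓ)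
    (hθ : thetaPos ℓ b = thetaPos ℓ b') (hs : b.1 + b.2.1 = b'.1 + b'.2.1) : b = b' := by
  obtain ⟨r, c, m⟩ := b; obtain ⟨r', c', m'⟩ := b'
  simp only [thetaPos] at hθ
  simp only at hb hb' hs ⊢
  have hd : (r : ℤ) - c = (r' : ℤ) - c' := by
    rcases lt_trichotomy ((r:ℤ) - c) ((r':ℤ) - c') with hlt | heq | hgt
    · have h2 := mul_le_mul_of_nonneg_left (by omega : (r:ℤ) - c + 1 ≤ (r':ℤ) - c')
        (by positivity : (0:ℤ) ≤ (ℓ:ℤ))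
      rw [mul_add, mul_one] at h2
      omega
    · exact heq
    · have h2 := mul_le_mul_of_nonneg_left (by omega : (r':ℤ) - c' + 1 ≤ (r:ℤ) - c)
        (by positivity : (0:ℤ) ≤ (ℓ:ℤ))
      rw [mul_add, mul_one] at h2
      omega
  rw [hd] at hθ
  simp only [Prod.mk.injEq]
  omega

lemma leastRem_eq {ℓ : ℕ} {D : Set Node} {X : Node} (hX : IsLeastRem ℓ D X) :
    leastRem ℓ D = X := by
  have hE : IsLeastRem ℓ D (leastRem ℓ D) := Classical.epsilon_spec ⟨X, hX⟩
  by_contra hne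
  exact nodeDom_asymm (hE.2 X hX.1 (fun hx => hne hx.symm)) (hX.2 _ hE.1 hne)

lemma row_le_of_le {ℓ : ℕ} (lam : MultiPartition ℓ) (m : ℕ) {r1 r2 : ℕ} (h : r1 ≤ r2) :
    lam.row m r2 ≤ lam.row m r1 := by
  induction r2, h using Nat.le_induction with
  | base => exact le_refl _
  | succ k hk ih => exact le_trans (lam.antitone m k) ih

lemma comp_lt_of_mem {ℓ : ℕ} {lam : MultiPartition ℓ} {b : Node} (hb : b ∈ diag lam) :
    b.2.2 < ℓ := by
  by_contra hc
  have := lam.comp_bound b.2.2 (by omega) (b.1 - 1)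
  obtain ⟨h1, h2, h3⟩ := hb
  omega

lemma col_le_of_mem {h ℓ : ℕ} {lam : MultiPartition ℓ} (hc : HCols h lam) {b : Node}
    (hb : b ∈ diag lam) : b.2.1 ≤ h :=
  le_trans hb.2.2 (hc _ _)

lemma diag_left_closed {ℓ : ℕ} {lam : MultiPartition ℓ} {r c m : ℕ}
    (hb : (r, c + 1, m) ∈ diag lam) (hc : 1 ≤ c) : (r, c, m) ∈ diag lam := by
  obtain ⟨h1, h2, h3⟩ := hb
  refine ⟨h1, hc, ?_⟩
  simp only at h3 ⊢
  omega

lemma diag_finite {ℓ : ℕ} (lam : MultiPartition ℓ) : (diag lam).Finite := by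
  classical
  choose Rf hRf using lam.row_finite
  set R := (Finset.range ℓ).sup Rf with hR
  set B := (Finset.range ℓ).sup (fun m => lam.row m 0) with hB
  apply Set.Finite.subset
    (Finset.range (R + 2) ×ˢ Finset.range (B + 1) ×ˢ Finset.range ℓ : Finset Node).finite_toSet
  rintro ⟨r, c, m⟩ hb
  have hm : m < ℓ := comp_lt_of_mem hb
  obtain ⟨h1, h2, h3⟩ := hb
  simp only at h1 h2 h3
  have hrow : lam.row m (r - 1) ≤ B := le_trans (row_le_of_le lam m (Nat.zero_le _))
    (Finset.le_sup (f := fun m => lam.row m 0) (Finset.mem_range.mpr hm))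
  have hRm : Rf m ≤ R := Finset.le_sup (Finset.mem_range.mpr hm)
  have hr : r - 1 < Rf m := by
    by_contra hx
    have := hRf m (r - 1) (by omega)
    omega
  simp only [Finset.coe_product, Set.mem_prod, Finset.mem_coe, Finset.mem_range]
  refine ⟨by omega, by omega, by omega⟩

end Aux
section Aux2

lemma size_eq_ncard {ℓ : ℕ} (lam : MultiPartition ℓ) : size lam = (diag lam).ncard := by
  classical
  choose Rf hRf using lam.row_finite
  set R := (Finset.range ℓ).sup Rf + 1 with hR
  have hRz : ∀ m r, R ≤ r → lam.row m r = 0 := by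
    intro m r hr
    by_cases hm : m < ℓ
    · refine hRf m r ?_
      have := Finset.le_sup (f := Rf) (Finset.mem_range.mpr hm)
      omega
    · exact lam.comp_bound m (by omega) r
  set D : Finset Node := (Finset.range ℓ).biUnion (fun m => (Finset.range R).biUnion
      (fun r => (Finset.Icc 1 (lam.row m r)).image (fun c => (r + 1, c, m)))) with hD
  have hcoe : (D : Set Node) = diag lam := by
    ext ⟨r, c, m⟩
    simp only [Finset.mem_coe, hD, Finset.mem_biUnion, Finset.mem_range,
      Finset.mem_image, Finset.mem_Icc, diag, Set.mem_setOf_eq]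
    constructor
    · rintro ⟨m', hm', r', hr', c', ⟨hc1, hc2⟩, heq⟩
      cases heq
      exact ⟨by omega, hc1, by simpa using hc2⟩
    · rintro ⟨h1, h2, h3⟩
      have hm : m < ℓ := by
        by_contra hc
        have := lam.comp_bound m (by omega) (r - 1)
        omega
      have hrR : r - 1 < R := by
        by_contra hc
        have := hRz m (r - 1) (by omega)
        omega
      refine ⟨m, hm, r - 1, hrR, c, ⟨h2, h3⟩, ?_⟩
      simp only [Prod.mk.injEq]
      exact ⟨by omega, trivial⟩
  have hcard : D.card = ∑ m ∈ Finset.range ℓ, ∑ r ∈ Finset.range R, lam.row m r := by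
    rw [Finset.card_biUnion]
    · refine Finset.sum_congr rfl fun m _ => ?_
      rw [Finset.card_biUnion]
      · refine Finset.sum_congr rfl fun r _ => ?_
        rw [Finset.card_image_of_injective _ (fun a b hab => by simpa using hab)]
        simp [Nat.card_Icc]
      · intro x _ y _ hxy
        simp only [Finset.disjoint_left, Finset.mem_image, Finset.mem_Icc]
        rintro a ⟨c1, _, rfl⟩ ⟨c2, _, h2⟩
        simp only [Prod.mk.injEq] at h2
        omega
    · intro x _ y _ hxy
      simp only [Finset.disjoint_left, Finset.mem_biUnion, Finset.mem_image, Finset.mem_Icc,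
        Finset.mem_range]
      rintro a ⟨r1, _, c1, _, rfl⟩ ⟨r2, _, c2, _, h2⟩
      simp only [Prod.mk.injEq] at h2
      omega
  have hsize : size lam = ∑ m ∈ Finset.range ℓ, ∑ r ∈ Finset.range R, lam.row m r := by
    unfold size
    rw [finsum_eq_sum_of_support_subset _ (s := Finset.range ℓ) ?_]
    · refine Finset.sum_congr rfl fun m _ => ?_
      rw [finsum_eq_sum_of_support_subset _ (s := Finset.range R) ?_]
      intro r hr
      simp only [Function.mem_support] at hr
      simp only [Finset.coe_range, Set.mem_Iio]
      by_contra hc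
      exact hr (hRz m r (by omega))
    · intro m hm
      simp only [Function.mem_support] at hm
      simp only [Finset.coe_range, Set.mem_Iio]
      by_contra hc
      exact hm (finsum_eq_zero_of_forall_eq_zero (fun r => lam.comp_bound m (by omega) r))
  rw [hsize, ← hcard, ← hcoe, Set.ncard_coe_finset]

def decRow {ℓ : ℕ} (lam : MultiPartition ℓ) (m R : ℕ)
    (hlt : lam.row m (R + 1) < lam.row m R) : MultiPartition ℓ where
  row m' r := if m' = m ∧ r = R then lam.row m R - 1 else lam.row m' r
  antitone m' r := by
    split_ifs with hA hB hB
    · omega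
    · obtain ⟨rfl, hr⟩ := hA
      subst hr
      have := lam.antitone m' r
      omega
    · obtain ⟨rfl, rfl⟩ := hB
      omega
    · exact lam.antitone m' r
  comp_bound m' hm' r := by
    split_ifs with hA
    · obtain ⟨rfl, rfl⟩ := hA
      have := lam.comp_bound m' hm' r
      omega
    · exact lam.comp_bound m' hm' r
  row_finite m' := by
    obtain ⟨R', hR'⟩ := lam.row_finite m'
    refine ⟨R' + R + 1, fun r hr => ?_⟩
    rw [if_neg (by omega)]
    exact hR' r (by omega)

lemma diag_decRow {ℓ : ℕ} (lam : MultiPartition ℓ) (m R : ℕ)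
    (hlt : lam.row m (R + 1) < lam.row m R) (hpos : 1 ≤ lam.row m R) :
    diag (decRow lam m R hlt) = diag lam \ {(R + 1, lam.row m R, m)} := by
  ext ⟨r, c, m'⟩
  simp only [diag, decRow, Set.mem_setOf_eq, Set.mem_diff, Set.mem_singleton_iff,
    Prod.mk.injEq]
  by_cases hc : m' = m ∧ r - 1 = R
  · obtain ⟨rfl, hr⟩ := hc
    rw [if_pos ⟨rfl, hr⟩, hr]
    constructor
    · rintro ⟨hr1, hc1, hc2⟩
      exact ⟨⟨hr1, hc1, by omega⟩, by omega⟩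
    · rintro ⟨⟨hr1, hc1, hc2⟩, hne⟩
      refine ⟨hr1, hc1, ?_⟩
      omega
  · rw [if_neg hc]
    constructor
    · rintro ⟨h1, h2, h3⟩
      refine ⟨⟨h1, h2, h3⟩, ?_⟩
      rintro ⟨rfl, rfl, rfl⟩
      exact hc ⟨rfl, by omega⟩
    · rintro ⟨hx, _⟩
      exact hx

lemma exists_rem {ℓ : ℕ} (lam : MultiPartition ℓ) (hne : (diag lam).Nonempty) :
    ∃ X, RemD ℓ (diag lam) X := by
  classical
  obtain ⟨⟨r, c, m⟩, hb⟩ := hne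
  obtain ⟨h1, h2, h3⟩ := hb
  simp only at h1 h2 h3
  obtain ⟨Rm, hRm⟩ := lam.row_finite m
  set P : ℕ → Prop := fun r' => 1 ≤ lam.row m r' with hPdef
  have hP : P (r - 1) := by
    show 1 ≤ _
    omega
  have hbound : r - 1 ≤ Rm := by
    by_contra hc
    have := hRm (r - 1) (by omega)
    simp only [hPdef] at hP
    omega
  set R := Nat.findGreatest P Rm with hRdef
  have hPR : P R := Nat.findGreatest_spec hbound hP
  have hzero : lam.row m (R + 1) = 0 := by
    by_cases hc2 : R + 1 ≤ Rm
    · by_contra hz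
      exact (Nat.findGreatest_is_greatest (by omega : R < R + 1) hc2) (by
        show 1 ≤ _
        omega)
    · exact hRm _ (by omega)
  have hPR' : 1 ≤ lam.row m R := hPR
  refine ⟨(R + 1, lam.row m R, m), ⟨by omega, by simpa using hPR', by simp⟩,
    ⟨decRow lam m R (by omega), diag_decRow lam m R (by omega) hPR'⟩⟩

lemma exists_isLeastRem {ℓ : ℕ} (lam : MultiPartition ℓ) (hne : (diag lam).Nonempty) :
    ∃ X, IsLeastRem ℓ (diag lam) X := by
  have hfin : {Y | RemD ℓ (diag lam) Y}.Finite := (diag_finite lam).subset (fun Y hY => hY.1)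
  obtain ⟨X0, hX0⟩ := exists_rem lam hne
  obtain ⟨X1, hX1, hmax1⟩ := Set.Finite.exists_maximalFor (fun b => thetaPos ℓ b) _ hfin
    ⟨X0, hX0⟩
  set S2 := {Y | RemD ℓ (diag lam) Y ∧ thetaPos ℓ Y = thetaPos ℓ X1} with hS2
  obtain ⟨X, hX, hmax2⟩ := Set.Finite.exists_maximalFor (fun b : Node => b.1 + b.2.1) S2
    (hfin.subset fun Y hY => hY.1) ⟨X1, hX1, rfl⟩
  refine ⟨X, hX.1, fun Y hY hYX => ?_⟩
  have hθle : thetaPos ℓ Y ≤ thetaPos ℓ X1 := by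
    by_contra hgt
    have h2 : thetaPos ℓ X1 ≤ thetaPos ℓ Y := by omega
    have := hmax1 hY h2
    beta_reduce at this
    omega
  have hθX : thetaPos ℓ X = thetaPos ℓ X1 := hX.2
  unfold NodeDom
  rcases lt_or_eq_of_le hθle with hlt | heq
  · exact Or.inl (by omega)
  · have hYS2 : Y ∈ S2 := ⟨hY, heq⟩
    have hsle : Y.1 + Y.2.1 ≤ X.1 + X.2.1 := by
      by_contra hgt
      have h2 : X.1 + X.2.1 ≤ Y.1 + Y.2.1 := by omega
      have := hmax2 hYS2 h2
      beta_reduce at this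
      omega
    rcases lt_or_eq_of_le hsle with hslt | hseq
    · exact Or.inr ⟨by omega, hslt⟩
    · have hθeq : thetaPos ℓ Y = thetaPos ℓ X := by omega
      exact absurd (node_eq_of_theta (comp_lt_of_mem hY.1) (comp_lt_of_mem hX.1.1)
        hθeq hseq) hYX
end Aux2
section Aux3

def TSet (h ℓ : ℕ) : Set Node := {b | b.1 = 1 ∧ 1 ≤ b.2.1 ∧ b.2.1 ≤ h ∧ b.2.2 < ℓ}

def SSet (h ℓ i : ℕ) : Set Node :=
  {b | b.1 = 1 ∧ 1 ≤ b.2.1 ∧ b.2.1 ≤ h ∧ b.2.2 < ℓ ∧ h * b.2.2 + b.2.1 ≤ h * ℓ - i}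

def shiftN : Node → Node := fun b => (b.1 + 1, b.2.1, b.2.2)

lemma shiftN_inj : Function.Injective shiftN := by
  rintro ⟨a, b, c⟩ ⟨d, e, f⟩ hx
  simp only [shiftN, Prod.mk.injEq] at hx ⊢
  omega

lemma thetaPos_shiftN (ℓ : ℕ) (b : Node) : thetaPos ℓ (shiftN b) = thetaPos ℓ b + ℓ := by
  obtain ⟨r, c, m⟩ := b
  simp only [thetaPos, shiftN]
  push_cast
  ring

lemma nodeDom_shiftN {ℓ : ℕ} {b b' : Node} (hd : NodeDom ℓ b b') :
    NodeDom ℓ (shiftN b) (shiftN b') := by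
  unfold NodeDom at hd ⊢
  rw [thetaPos_shiftN, thetaPos_shiftN]
  rcases hd with h1 | ⟨h1, h2⟩
  · exact Or.inl (by omega)
  · refine Or.inr ⟨by omega, ?_⟩
    simp only [shiftN]
    omega

lemma hcols_of_subset {h ℓ : ℕ} {lam lam' : MultiPartition ℓ} (hsub : diag lam' ⊆ diag lam)
    (hc : HCols h lam) : HCols h lam' := by
  intro m r
  rcases Nat.eq_zero_or_pos (lam'.row m r) with h0 | hpos
  · omega
  · have hmem : (r + 1, lam'.row m r, m) ∈ diag lam' := ⟨by omega, hpos, le_refl _⟩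
    have := hsub hmem
    exact le_trans this.2.2 (hc _ _)

lemma diag_detMP {h ℓ : ℕ} (lam : MultiPartition ℓ) (hc : HCols h lam) :
    diag (detMP h lam hc) = TSet h ℓ ∪ shiftN '' diag lam := by
  ext ⟨r, c, m⟩
  simp only [diag, detMP, Set.mem_setOf_eq, Set.mem_union, TSet, Set.mem_image, shiftN]
  constructor
  · rintro ⟨h1, h2, h3⟩
    by_cases hm : m < ℓ
    · rw [if_pos hm] at h3
      by_cases hr : r - 1 = 0
      · rw [if_pos hr] at h3
        exact Or.inl ⟨by omega, h2, h3, hm⟩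
      · rw [if_neg hr] at h3
        refine Or.inr ⟨(r - 1, c, m), ⟨by omega, h2, h3⟩, ?_⟩
        simp only [Prod.mk.injEq]
        exact ⟨by omega, trivial⟩
    · rw [if_neg hm] at h3
      exact absurd h3 (by omega)
  · rintro (⟨h1, h2, h3, h4⟩ | ⟨⟨r', c', m'⟩, ⟨g1, g2, g3⟩, heq⟩)
    · refine ⟨by omega, h2, ?_⟩
      rw [if_pos h4, if_pos (by omega)]
      exact h3
    · simp only [Prod.mk.injEq] at heq
      obtain ⟨e1, e2, e3⟩ := heq
      subst e1; subst e2; subst e3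
      have g1' : 1 ≤ r' := g1
      have g2' : 1 ≤ c' := g2
      have g3' : c' ≤ lam.row m' (r' - 1) := g3
      have hm : m' < ℓ := by
        by_contra hcon
        have := lam.comp_bound m' (by omega) (r' - 1)
        omega
      refine ⟨by omega, g2', ?_⟩
      rw [if_pos hm, if_neg (by omega)]
      simpa using g3'

def dropTop {ℓ : ℕ} (ν : MultiPartition ℓ) : MultiPartition ℓ where
  row m r := ν.row m (r + 1)
  antitone m r := ν.antitone m (r + 1)
  comp_bound m hm r := ν.comp_bound m hm (r + 1)
  row_finite m := ⟨(ν.row_finite m).choose, fun r hr =>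
    (ν.row_finite m).choose_spec (r + 1) (by omega)⟩

lemma union_diff_shift {h ℓ : ℕ} (D : Set Node) {X : Node} (hX1 : 1 ≤ X.1) :
    (TSet h ℓ ∪ shiftN '' D) \ {shiftN X} = TSet h ℓ ∪ shiftN '' (D \ {X}) := by
  rw [Set.image_diff shiftN_inj, Set.image_singleton, Set.union_diff_distrib]
  congr 1
  apply Set.diff_singleton_eq_self
  rintro ⟨h1, -⟩
  obtain ⟨a, b, c⟩ := X
  simp only [shiftN] at h1
  simp only at hX1
  omega

lemma isLeastRem_union {h ℓ : ℕ} (lam : MultiPartition ℓ) (hc : HCols h lam)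
    {X : Node} (hX : IsLeastRem ℓ (diag lam) X) :
    IsLeastRem ℓ (TSet h ℓ ∪ shiftN '' diag lam) (shiftN X) := by
  obtain ⟨⟨hXmem, lam', hlam'⟩, hleast⟩ := hX
  have hcols' : HCols h lam' := hcols_of_subset (by rw [hlam']; exact Set.diff_subset) hc
  constructor
  · refine ⟨Or.inr ⟨X, hXmem, rfl⟩, detMP h lam' hcols', ?_⟩
    rw [union_diff_shift _ hXmem.1, diag_detMP lam' hcols', hlam']
  · rintro Y hY hne
    obtain ⟨hYmem, ν, hν⟩ := hY
    rcases hYmem with hYT | ⟨Y₀, hY₀mem, rfl⟩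
    · -- Y in the top rows
      obtain ⟨a, b, m⟩ := Y
      obtain ⟨hY1, hYb, hYbh, hYm⟩ := hYT
      simp only at hY1 hYb hYbh hYm
      subst hY1
      have hYcol : b = h := by
        by_contra hch
        have hmem2 : ((1:ℕ), b + 1, m) ∈ TSet h ℓ := by
          simp only [TSet, Set.mem_setOf_eq]
          refine ⟨trivial, by omega, by omega, hYm⟩
        have hne2 : ((1:ℕ), b + 1, m) ≠ ((1:ℕ), b, m) := by
          simp only [ne_eq, Prod.mk.injEq]
          omega
        have h5 : ((1:ℕ), b + 1, m) ∈ diag ν := by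
          rw [hν]
          exact ⟨Or.inl hmem2, hne2⟩
        have h6 := diag_left_closed h5 hYb
        rw [hν] at h6
        exact h6.2 rfl
      obtain ⟨rX, cX, mX⟩ := X
      have hXr : 1 ≤ rX := hXmem.1
      have hXc : 1 ≤ cX := hXmem.2.1
      have hXch : cX ≤ h := col_le_of_mem hc hXmem
      have hXm : mX < ℓ := comp_lt_of_mem hXmem
      left
      simp only [thetaPos, shiftN]
      have key : (ℓ:ℤ) * 1 ≤ (ℓ:ℤ) * (((rX:ℤ) + 1) - cX - (1 - b)) := by
        apply mul_le_mul_of_nonneg_left ?_ (by positivity)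
        omega
      rw [mul_one, mul_sub] at key
      have hmℤ : (m:ℤ) < ℓ := by exact_mod_cast hYm
      have hmXℤ : (0:ℤ) ≤ mX := by positivity
      push_cast
      linarith
    · -- Y is a shifted node
      have hdrop : diag (dropTop ν) = diag lam \ {Y₀} := by
        ext ⟨r, c, m⟩
        constructor
        · rintro ⟨g1, g2, g3⟩
          simp only [dropTop] at g3
          have hr1 : r - 1 + 1 = r := by omega
          rw [hr1] at g3
          have hmem : (r + 1, c, m) ∈ diag ν := ⟨by omega, g2, by simpa using g3⟩
          rw [hν] at hmem
          obtain ⟨hmem2, hne2⟩ := hmem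
          rcases hmem2 with hT | ⟨Z, hZ, hZeq⟩
          · exact absurd hT.1 (by omega)
          · have hZ2 : Z = (r, c, m) := shiftN_inj hZeq
            subst hZ2
            refine ⟨hZ, fun hEq => hne2 ?_⟩
            exact congrArg shiftN hEq
        · rintro ⟨hmem, hne3⟩
          have hsm : shiftN (r, c, m) ∈ diag ν := by
            rw [hν]
            exact ⟨Or.inr ⟨_, hmem, rfl⟩, fun hEq => hne3 (shiftN_inj hEq)⟩
          obtain ⟨g1, g2, g3⟩ := hsm
          refine ⟨hmem.1, g2, ?_⟩
          simp only [dropTop]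
          have hr1 : r - 1 + 1 = r := by
            have := hmem.1
            simp only at this
            omega
          rw [hr1]
          simpa [shiftN] using g3
      have hY₀rem : RemD ℓ (diag lam) Y₀ := ⟨hY₀mem, dropTop ν, hdrop⟩
      have hY₀ne : Y₀ ≠ X := fun hEq => hne (congrArg shiftN hEq)
      exact nodeDom_shiftN (hleast Y₀ hY₀rem hY₀ne)

end Aux3
section Aux4

def stairMP (h ℓ i : ℕ) : MultiPartition ℓ where
  row m r := if r = 0 ∧ m < ℓ then min h (h * ℓ - i - h * m) else 0
  antitone m r := by
    rw [if_neg (by omega)]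
    exact Nat.zero_le _
  comp_bound m hm r := by
    rw [if_neg (by omega)]
  row_finite m := ⟨1, fun r hr => by
    rw [if_neg (by omega)]⟩

lemma diag_stairMP (h ℓ i : ℕ) : diag (stairMP h ℓ i) = SSet h ℓ i := by
  ext ⟨r, c, m⟩
  simp only [diag, stairMP, SSet, Set.mem_setOf_eq]
  constructor
  · rintro ⟨h1, h2, h3⟩
    by_cases hcond : r - 1 = 0 ∧ m < ℓ
    · rw [if_pos hcond, le_min_iff] at h3
      exact ⟨by omega, h2, h3.1, hcond.2, by omega⟩
    · rw [if_neg hcond] at h3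
      omega
  · rintro ⟨h1, h2, h3, h4, h5⟩
    refine ⟨by omega, h2, ?_⟩
    rw [if_pos ⟨by omega, h4⟩, le_min_iff]
    exact ⟨h3, by omega⟩

lemma exists_decomp {h ℓ K : ℕ} (hh : 1 ≤ h) (h1 : 1 ≤ K) (h2 : K ≤ h * ℓ) :
    ∃ m c, K = h * m + c ∧ 1 ≤ c ∧ c ≤ h ∧ m < ℓ := by
  have hm := Nat.mod_lt (K - 1) (show 0 < h by omega)
  have hd := Nat.div_add_mod (K - 1) h
  refine ⟨(K - 1) / h, (K - 1) % h + 1, by omega, by omega, by omega, ?_⟩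
  have hlt : h * ((K - 1) / h) < h * ℓ := by omega
  exact Nat.lt_of_mul_lt_mul_left hlt

lemma uniq_pos {h m c m' c' : ℕ} (heq : h * m + c = h * m' + c')
    (hc1 : 1 ≤ c) (hch : c ≤ h) (hc1' : 1 ≤ c') (hch' : c' ≤ h) : m = m' ∧ c = c' := by
  rcases Nat.lt_trichotomy m m' with hlt | heq2 | hgt
  · have h2 : h * (m + 1) ≤ h * m' := Nat.mul_le_mul (le_refl h) hlt
    rw [Nat.mul_succ] at h2
    omega
  · subst heq2
    omega
  · have h2 : h * (m' + 1) ≤ h * m := Nat.mul_le_mul (le_refl h) hgt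
    rw [Nat.mul_succ] at h2
    omega

lemma isLeastRem_stair {h ℓ : ℕ} (hh : 1 ≤ h) {i : ℕ} (hi : i < h * ℓ) :
    ∃ X : Node, IsLeastRem ℓ (SSet h ℓ i) X ∧ X.1 = 1 ∧ 1 ≤ X.2.1 ∧ X.2.1 ≤ h ∧
      h * X.2.2 + X.2.1 = h * ℓ - i ∧ SSet h ℓ i \ {X} = SSet h ℓ (i + 1) := by
  obtain ⟨m, c, hK, hc1, hch, hm⟩ := exists_decomp hh (show 1 ≤ h * ℓ - i by omega)
    (show h * ℓ - i ≤ h * ℓ by omega)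
  have hdiff : SSet h ℓ i \ {((1:ℕ), c, m)} = SSet h ℓ (i + 1) := by
    ext ⟨r, c', m'⟩
    simp only [SSet, Set.mem_diff, Set.mem_setOf_eq, Set.mem_singleton_iff, Prod.mk.injEq]
    constructor
    · rintro ⟨⟨g1, g2, g3, g4, g5⟩, hne⟩
      refine ⟨g1, g2, g3, g4, ?_⟩
      by_contra hgt
      have heq2 : h * m' + c' = h * m + c := by omega
      obtain ⟨e1, e2⟩ := uniq_pos heq2 g2 g3 hc1 hch
      exact hne ⟨g1, by omega, by omega⟩
    · rintro ⟨g1, g2, g3, g4, g5⟩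
      refine ⟨⟨g1, g2, g3, g4, by omega⟩, ?_⟩
      rintro ⟨e1, e2, e3⟩
      subst e2; subst e3
      omega
  have hmem : ((1:ℕ), c, m) ∈ SSet h ℓ i := by
    simp only [SSet, Set.mem_setOf_eq]
    refine ⟨trivial, hc1, hch, hm, by omega⟩
  refine ⟨((1:ℕ), c, m), ⟨⟨hmem, stairMP h ℓ (i + 1), by rw [diag_stairMP, hdiff]⟩, ?_⟩,
    rfl, hc1, hch, by simp only; omega, hdiff⟩
  rintro ⟨r', c', m'⟩ hY hne
  obtain ⟨⟨g1, g2, g3, g4, g5⟩, ν, hν⟩ := hY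
  have g1' : r' = 1 := g1
  have g2' : 1 ≤ c' := g2
  have g3' : c' ≤ h := g3
  have g4' : m' < ℓ := g4
  have g5' : h * m' + c' ≤ h * ℓ - i := g5
  subst g1'
  have hor : c' = h ∨ h * m' + c' = h * ℓ - i := by
    by_contra hcon
    push_neg at hcon
    obtain ⟨hc'h, hKlt⟩ := hcon
    have hmem2 : ((1:ℕ), c' + 1, m') ∈ SSet h ℓ i := by
      simp only [SSet, Set.mem_setOf_eq]
      refine ⟨trivial, by omega, ?_, g4', ?_⟩
      · omega
      · omega
    have hne2 : ((1:ℕ), c' + 1, m') ≠ ((1:ℕ), c', m') := by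
      simp only [ne_eq, Prod.mk.injEq]
      omega
    have h5 : ((1:ℕ), c' + 1, m') ∈ diag ν := by
      rw [hν]
      exact ⟨hmem2, hne2⟩
    have h6 := diag_left_closed h5 g2'
    rw [hν] at h6
    exact h6.2 rfl
  rcases hor with hc'h | hKeq
  · have hne3 : h * m' + c' ≠ h * ℓ - i := by
      intro hx
      obtain ⟨e1, e2⟩ := uniq_pos (show h * m' + c' = h * m + c by omega) g2' g3' hc1 hch
      exact hne (by simp only [Prod.mk.injEq]; exact ⟨trivial, e2, e1⟩)
    have hmm : m' < m := by
      have hx : h * m' < h * m := by omega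
      exact Nat.lt_of_mul_lt_mul_left hx
    left
    simp only [thetaPos]
    have key : (ℓ:ℤ) * ((1:ℤ) - c') ≤ (ℓ:ℤ) * ((1:ℤ) - c) := by
      apply mul_le_mul_of_nonneg_left ?_ (by positivity)
      omega
    have hmmℤ : (m':ℤ) < m := by exact_mod_cast hmm
    push_cast
    linarith
  · obtain ⟨e1, e2⟩ := uniq_pos (show h * m' + c' = h * m + c by omega) g2' g3' hc1 hch
    exact absurd (by simp only [Prod.mk.injEq]; exact ⟨trivial, e2, e1⟩ :
      ((1:ℕ), c', m') = ((1:ℕ), c, m)) hne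

lemma PDiag_succ (ℓ : ℕ) (D : Set Node) (j : ℕ) :
    PDiag ℓ D (j + 1) = PDiag ℓ D j \ {leastRem ℓ (PDiag ℓ D j)} := rfl

lemma pdiag_struct {h ℓ n : ℕ} (μ : MultiPartition ℓ) (hμc : HCols h μ)
    (hμ : size μ = n) :
    ∀ j, j ≤ n → ∃ lamj : MultiPartition ℓ,
      diag lamj = PDiag ℓ (diag μ) j ∧ HCols h lamj ∧ size lamj = n - j ∧
      PDiag ℓ (diag (detMP h μ hμc)) j = TSet h ℓ ∪ shiftN '' PDiag ℓ (diag μ) j := by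
  intro j
  induction j with
  | zero =>
    intro _
    exact ⟨μ, rfl, hμc, by omega, by simp [PDiag, diag_detMP μ hμc]⟩
  | succ j ih =>
    intro hj
    obtain ⟨lamj, hd, hcolsj, hsz, hdet⟩ := ih (by omega)
    have hne : (diag lamj).Nonempty := by
      apply Set.nonempty_of_ncard_ne_zero
      rw [← size_eq_ncard]
      omega
    obtain ⟨X, hX⟩ := exists_isLeastRem lamj hne
    have hXd : IsLeastRem ℓ (PDiag ℓ (diag μ) j) X := by rwa [hd] at hX
    have hlr : leastRem ℓ (PDiag ℓ (diag μ) j) = X := leastRem_eq hXd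
    obtain ⟨lam', hlam'⟩ := hX.1.2
    have hcols' : HCols h lam' := hcols_of_subset (by rw [hlam']; exact Set.diff_subset) hcolsj
    have hPD : PDiag ℓ (diag μ) (j + 1) = diag lamj \ {X} := by
      rw [PDiag_succ, hlr, hd]
    refine ⟨lam', ?_, hcols', ?_, ?_⟩
    · rw [hPD, hlam']
    · rw [size_eq_ncard, hlam', Set.ncard_diff_singleton_of_mem hX.1.1]
      have := size_eq_ncard lamj
      omega
    · have hXu : IsLeastRem ℓ (TSet h ℓ ∪ shiftN '' diag lamj) (shiftN X) :=
        isLeastRem_union lamj hcolsj hX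
      rw [PDiag_succ, hdet, ← hd, leastRem_eq hXu, union_diff_shift _ hX.1.1.1, hPD, hd]

lemma tPath_det_eq {h ℓ n : ℕ} (hh : 1 ≤ h) (μ : MultiPartition ℓ)
    (hμ : size μ = n) (hμc : HCols h μ) :
    tPath h ℓ (n + h * ℓ) (detMP h μ hμc) = detPath (h * ℓ) n (tPath h ℓ n μ) := by
  have hstruct := pdiag_struct μ hμc hμ
  have hTS : TSet h ℓ = SSet h ℓ 0 := by
    ext ⟨r, c, m⟩
    simp only [TSet, SSet, Set.mem_setOf_eq]
    constructor
    · rintro ⟨g1, g2, g3, g4⟩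
      refine ⟨g1, g2, g3, g4, ?_⟩
      have hx : h * (m + 1) ≤ h * ℓ := Nat.mul_le_mul (le_refl h) (by omega)
      rw [Nat.mul_succ] at hx
      omega
    · rintro ⟨g1, g2, g3, g4, -⟩
      exact ⟨g1, g2, g3, g4⟩
  have hstair : ∀ i, i ≤ h * ℓ → PDiag ℓ (diag (detMP h μ hμc)) (n + i) = SSet h ℓ i := by
    intro i
    induction i with
    | zero =>
      intro _
      obtain ⟨lamn, hd, _, hsz, hdet⟩ := hstruct n (le_refl n)
      rw [Nat.add_zero, hdet]
      have hempty : PDiag ℓ (diag μ) n = ∅ := by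
        rw [← hd, ← Set.ncard_eq_zero (diag_finite lamn), ← size_eq_ncard]
        omega
      rw [hempty]
      simp [hTS]
    | succ i ih =>
      intro hi
      rw [show n + (i + 1) = (n + i) + 1 by omega, PDiag_succ, ih (by omega)]
      obtain ⟨X, hX, _, _, _, _, hdiff⟩ := isLeastRem_stair hh (show i < h * ℓ by omega)
      rw [leastRem_eq hX, hdiff]
  funext k
  simp only [tPath, detPath]
  by_cases hk1 : k < h * ℓ
  · have hkn : k < n + h * ℓ := by omega
    rw [if_pos hkn, if_pos hk1]
    have hidx : n + h * ℓ - 1 - k = n + (h * ℓ - 1 - k) := by omega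
    rw [hidx, hstair (h * ℓ - 1 - k) (by omega)]
    obtain ⟨X, hX, hx1, hxc1, hxch, hxK, -⟩ := isLeastRem_stair hh
      (show h * ℓ - 1 - k < h * ℓ by omega)
    rw [leastRem_eq hX]
    omega
  · by_cases hk2 : k < n + h * ℓ
    · rw [if_pos hk2, if_neg hk1, if_pos (show k < h * ℓ + n by omega),
        if_pos (show k - h * ℓ < n by omega)]
      have hjn : n + h * ℓ - 1 - k < n := by omega
      obtain ⟨lamj, hd, hcolsj, hsz, hdet⟩ := hstruct (n + h * ℓ - 1 - k) (by omega)
      have hne : (diag lamj).Nonempty := by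
        apply Set.nonempty_of_ncard_ne_zero
        rw [← size_eq_ncard]
        omega
      obtain ⟨X, hX⟩ := exists_isLeastRem lamj hne
      have hXu : IsLeastRem ℓ (TSet h ℓ ∪ shiftN '' diag lamj) (shiftN X) :=
        isLeastRem_union lamj hcolsj hX
      rw [hd] at hX hXu
      rw [hdet, leastRem_eq hXu]
      have hidx2 : n - 1 - (k - h * ℓ) = n + h * ℓ - 1 - k := by omega
      rw [hidx2, leastRem_eq hX]
      rfl
    · rw [if_neg hk2, if_neg hk1, if_neg (by omega)]

end Aux4
section Aux5

lemma val_shift_eq {e : ℕ} [NeZero e] (u v : ZMod e) {d : ℕ} (hd : v.val = u.val + d) :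
    v = u + (d : ZMod e) := by
  have h1 : ((v.val : ℕ) : ZMod e) = v := by rw [ZMod.natCast_val, ZMod.cast_id]
  have h2 : ((u.val : ℕ) : ZMod e) = u := by rw [ZMod.natCast_val, ZMod.cast_id]
  rw [← h1, ← h2, hd]
  push_cast
  ring

lemma no_wall_zmod {e h ℓ : ℕ} {κ : ℕ → ZMod e} (hh : 1 ≤ h) (hl : 1 ≤ ℓ)
    (he : h * ℓ < e) (hadm : HAdmissible e h ℓ κ) (hnorm : Normalized e h ℓ κ)
    {m t a b δ : ℕ} (hmt : m ≤ t) (ht : t < ℓ) (ha : a < h) (hb : b < h) (hδ : δ ≤ 1)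
    (hij : h * m + a < h * t + b)
    (heq : κ m + (a : ZMod e) = κ t + (b : ZMod e) + (δ : ZMod e)) : False := by
  haveI : NeZero e := ⟨by omega⟩
  have hm : m < ℓ := by omega
  have hhl0 : h ≤ h * ℓ := Nat.le_mul_of_pos_right h (by omega)
  have heq' : κ m + (a : ZMod e) = κ t + ((b + δ : ℕ) : ZMod e) := by
    rw [heq]
    push_cast
    ring
  set d' : ℕ := b + δ with hd'
  rcases Nat.lt_or_ge a d' with had | had
  · -- a < d'
    rcases Nat.lt_or_ge (d' - a) h with hcase | hcase
    · -- d' - a < h : small shift, admissibility forces m = t then a = d'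
      have hshift : κ m = κ t + ((d' - a : ℕ) : ZMod e) := by
        have : ((d' : ℕ) : ZMod e) = ((a : ℕ) : ZMod e) + ((d' - a : ℕ) : ZMod e) := by
          rw [← Nat.cast_add]
          congr 1
          omega
        rw [this] at heq'
        have := add_right_cancel (a := κ m) (b := (a : ZMod e))
          (c := κ t + ((d' - a : ℕ) : ZMod e))
        apply this
        rw [heq']
        ring
      have hmt2 : m = t := hadm (κ t) m t hm ht ⟨d' - a, hcase, hshift⟩ ⟨0, by omega, by simp⟩
      subst hmt2
      have hcancel : ((a : ℕ) : ZMod e) = ((d' : ℕ) : ZMod e) := by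
        have := heq'
        rwa [add_right_inj] at this
      have : a = d' := by
        have := congrArg ZMod.val hcancel
        rwa [ZMod.val_natCast, ZMod.val_natCast, Nat.mod_eq_of_lt (by omega),
          Nat.mod_eq_of_lt (by omega)] at this
      omega
    · -- d' - a ≥ h : forces a = 0, δ = 1, b = h - 1, d' = h
      have ha0 : a = 0 := by omega
      have hd'h : d' = h := by omega
      subst ha0
      have hbig : κ m = κ t + ((h : ℕ) : ZMod e) := by
        rw [hd'h] at heq'
        simpa using heq'
      rcases Nat.eq_or_lt_of_le hmt with hmt2 | hmt2
      · -- m = t : h ≡ 0 mod e, impossible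
        subst hmt2
        have hz0 : ((h : ℕ) : ZMod e) = 0 := by linear_combination -hbig
        rw [ZMod.natCast_eq_zero_iff] at hz0
        have := Nat.le_of_dvd (by omega) hz0
        omega
      · -- m < t
        have hvlt : (κ m).val < (κ t).val := hnorm.1 m t hmt2 ht
        have hvt : (κ t).val < e := ZMod.val_lt _
        have hvm : (κ m).val < e := ZMod.val_lt _
        have hvme : (κ m).val = ((κ t).val + h) % e := by
          have h1 : ((κ m).val : ZMod e) = κ m := by rw [ZMod.natCast_val, ZMod.cast_id]
          have h2 : (((κ t).val + h : ℕ) : ZMod e) = κ t + (h : ZMod e) := by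
            push_cast
            rw [ZMod.natCast_val, ZMod.cast_id]
          have h3 : ((κ m).val : ZMod e) = (((κ t).val + h : ℕ) : ZMod e) := by
            rw [h1, h2, hbig]
          have := congrArg ZMod.val h3
          rwa [ZMod.val_natCast, ZMod.val_natCast, Nat.mod_eq_of_lt hvm] at this
        have hwrap : e ≤ (κ t).val + h := by
          by_contra hcon
      -- else val m = val t + h > val t, contradiction
          rw [Nat.mod_eq_of_lt (by omega)] at hvme
          omega
        have hvme2 : (κ m).val = (κ t).val + h - e := by
          rw [Nat.mod_eq_sub_mod (by omega), Nat.mod_eq_of_lt (by omega)] at hvme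
          omega
        -- t must be ℓ - 1
        have htl : t = ℓ - 1 := by
          by_contra hcon
          have ht1 : t + 1 < ℓ := by omega
          have hstep : (κ t).val < (κ (t + 1)).val := hnorm.1 t (t + 1) (by omega) ht1
          have hvt1 : (κ (t + 1)).val < e := ZMod.val_lt _
          set d := (κ (t + 1)).val - (κ t).val with hdd
          have hshift : κ (t + 1) = κ t + (d : ZMod e) :=
            val_shift_eq (κ t) (κ (t + 1)) (by omega)
          have := hadm (κ t) (t + 1) t ht1 ht ⟨d, by omega, hshift⟩ ⟨0, by omega, by simp⟩
          omega
        -- m must be 0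
        have hm0 : m = 0 := by
          by_contra hcon
          have hstep : (κ 0).val < (κ m).val := hnorm.1 0 m (by omega) hm
          set d := (κ m).val - (κ 0).val with hdd
          have hshift : κ m = κ 0 + (d : ZMod e) :=
            val_shift_eq (κ 0) (κ m) (by omega)
          have := hadm (κ 0) m 0 hm (by omega) ⟨d, by omega, hshift⟩ ⟨0, by omega, by simp⟩
          omega
        subst htl; subst hm0
        exact hnorm.2 (by rw [← hbig])
  · -- a ≥ d'
    have hshift : κ t = κ m + ((a - d' : ℕ) : ZMod e) := by
      have hsplit : ((a : ℕ) : ZMod e) = ((d' : ℕ) : ZMod e) + ((a - d' : ℕ) : ZMod e) := by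
        rw [← Nat.cast_add]
        congr 1
        omega
      rw [hsplit] at heq'
      have h2 : κ m + ((a - d' : ℕ) : ZMod e) + ((d' : ℕ) : ZMod e)
          = κ t + ((d' : ℕ) : ZMod e) := by
        rw [← heq']
        ring
      exact (add_right_cancel h2).symm
    have hmt2 : m = t := hadm (κ m) m t hm ht ⟨0, by omega, by simp⟩
      ⟨a - d', by omega, hshift⟩
    subst hmt2
    have hcancel : ((a : ℕ) : ZMod e) = ((d' : ℕ) : ZMod e) := by
      have := heq'
      rwa [add_right_inj] at this
    have : a = d' := by
      have := congrArg ZMod.val hcancel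
      rwa [ZMod.val_natCast, ZMod.val_natCast, Nat.mod_eq_of_lt (by omega),
        Nat.mod_eq_of_lt (by omega)] at this
    omega

lemma prefix_not_onWall {e h ℓ : ℕ} {κ : ℕ → ZMod e} (hh : 1 ≤ h) (hl : 1 ≤ ℓ)
    (he : h * ℓ < e) (hadm : HAdmissible e h ℓ κ) (hnorm : Normalized e h ℓ κ)
    {i j : ℕ} (hij : i < j) (hj : j < h * ℓ) (k : ℕ) (r : ℤ) :
    ¬OnWall e h κ (fun a => if a < k then (1:ℝ) else 0) i j r := by
  intro hw
  haveI : NeZero e := ⟨by omega⟩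
  simp only [OnWall, pairV] at hw
  set δ : ℕ := (if i < k then 1 else 0) - (if j < k then 1 else 0) with hδdef
  have hδ1 : δ ≤ 1 := by
    simp only [hδdef]
    split_ifs <;> omega
  have hδr : ((if i < k then (1:ℝ) else 0) - (if j < k then (1:ℝ) else 0)) = (δ : ℝ) := by
    have hik : j < k → i < k := fun hx => by omega
    by_cases h1 : j < k
    · simp [h1, hik h1, hδdef]
    · by_cases h2 : i < k <;> simp [h1, h2, hδdef]
  have hint : (δ : ℤ) + rhoZ e h κ i - rhoZ e h κ j = r * e := by
    have hreal : (((δ : ℤ) + rhoZ e h κ i - rhoZ e h κ j : ℤ) : ℝ) = ((r * e : ℤ) : ℝ) := by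
      push_cast
      push_cast at hδr
      linarith [hw, hδr]
    exact_mod_cast hreal
  -- move to ZMod e
  have hz := congrArg (fun z : ℤ => (z : ZMod e)) hint
  have hval : ∀ s : ℕ, (((κ s).val : ℕ) : ZMod e) = κ s := fun s => by
    rw [ZMod.natCast_val, ZMod.cast_id]
  simp only [rhoZ, Int.cast_add, Int.cast_sub, Int.cast_mul, Int.cast_natCast,
    ZMod.natCast_self] at hz
  rw [hval (i / h), hval (j / h)] at hz
  have heq : κ (i / h) + ((i % h : ℕ) : ZMod e) = κ (j / h) + ((j % h : ℕ) : ZMod e)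
      + ((δ : ℕ) : ZMod e) := by
    linear_combination -hz
  have hmt : i / h ≤ j / h := Nat.div_le_div_right (le_of_lt hij)
  have htl : j / h < ℓ := by
    rw [Nat.div_lt_iff_lt_mul (by omega), Nat.mul_comm]
    exact hj
  have hahm : i % h < h := Nat.mod_lt _ (by omega)
  have hbhm : j % h < h := Nat.mod_lt _ (by omega)
  have hijm : h * (i / h) + i % h < h * (j / h) + j % h := by
    have h1 := Nat.div_add_mod i h
    have h2 := Nat.div_add_mod j h
    omega
  exact no_wall_zmod hh hl he hadm hnorm hmt htl hahm hbhm hδ1 hijm heq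

end Aux5
section Aux6

lemma pts_succ (s : ℕ → ℕ) (k a : ℕ) :
    pts s (k + 1) a = pts s k a + if s k = a then 1 else 0 := by
  classical
  simp only [pts, Finset.range_add_one, Finset.filter_insert]
  split_ifs with hx
  · rw [Finset.card_insert_of_notMem (fun hc => by
      simp only [Finset.mem_filter, Finset.mem_range] at hc
      omega)]
    push_cast
    ring
  · simp

lemma step_eq_of_pts {s t : ℕ → ℕ} {k : ℕ} (h1 : pts s k = pts t k)
    (h2 : pts s (k + 1) = pts t (k + 1)) : s k = t k := by
  have ha := congrFun h2 (s k)
  rw [pts_succ, pts_succ, congrFun h1 (s k)] at ha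
  by_contra hne
  rw [if_pos rfl, if_neg (fun hx : t k = s k => hne hx.symm)] at ha
  norm_num at ha

lemma pts_detPath_prefix (N n : ℕ) (s : ℕ → ℕ) {l : ℕ} (hl : l ≤ N) :
    pts (detPath N n s) l = fun a => if a < l then (1:ℝ) else 0 := by
  classical
  funext a
  show ((Finset.filter (fun i => detPath N n s i = a) (Finset.range l)).card : ℝ) = _
  have hcong : Finset.filter (fun i => detPath N n s i = a) (Finset.range l)
      = Finset.filter (fun i => i = a) (Finset.range l) := by
    apply Finset.filter_congr
    intro x hx
    simp only [Finset.mem_range] at hx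
    simp only [detPath]
    rw [if_pos (show x < N by omega)]
  rw [hcong, Finset.filter_eq']
  by_cases ha : a < l
  · rw [if_pos (Finset.mem_range.mpr ha), if_pos ha]
    simp
  · rw [if_neg (fun hc => ha (Finset.mem_range.mp hc)), if_neg ha]
    simp

lemma pts_detPath_suffix (N n : ℕ) (s : ℕ → ℕ) {l : ℕ} (hl : l ≤ n) :
    pts (detPath N n s) (N + l) = fun a => (if a < N then (1:ℝ) else 0) + pts s l a := by
  classical
  funext a
  show ((Finset.filter (fun i => detPath N n s i = a) (Finset.range (N + l))).card : ℝ) = _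
  have hsplit : Finset.range (N + l) = Finset.range N ∪ Finset.Ico N (N + l) := by
    rw [Finset.range_eq_Ico, Finset.range_eq_Ico, Finset.Ico_union_Ico_eq_Ico (Nat.zero_le N) (by omega)]
  rw [hsplit, Finset.filter_union, Finset.card_union_of_disjoint
    (Finset.disjoint_filter_filter
      (by rw [Finset.range_eq_Ico]; exact Finset.Ico_disjoint_Ico_consecutive 0 N (N + l)))]
  have hfirst := congrFun (pts_detPath_prefix N n s (le_refl N)) a
  have hsecond : (Finset.filter (fun i => detPath N n s i = a) (Finset.Ico N (N + l))).card
      = (Finset.filter (fun i => s i = a) (Finset.range l)).card := by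
    apply Finset.card_bij (fun k _ => k - N)
    · intro x hx
      simp only [Finset.mem_filter, Finset.mem_Ico] at hx
      simp only [Finset.mem_filter, Finset.mem_range]
      obtain ⟨⟨hx1, hx2⟩, hx3⟩ := hx
      refine ⟨by omega, ?_⟩
      simp only [detPath] at hx3
      rw [if_neg (by omega), if_pos (by omega)] at hx3
      exact hx3
    · intro x hx y hy hxy
      simp only [Finset.mem_filter, Finset.mem_Ico] at hx hy
      omega
    · intro b hb
      simp only [Finset.mem_filter, Finset.mem_range] at hb
      refine ⟨b + N, ?_, by omega⟩
      simp only [Finset.mem_filter, Finset.mem_Ico]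
      refine ⟨⟨by omega, by omega⟩, ?_⟩
      simp only [detPath]
      rw [if_neg (by omega), if_pos (by omega)]
      simpa using hb.2
  rw [hsecond]
  push_cast
  rw [show ((Finset.filter (fun i => detPath N n s i = a) (Finset.range N)).card : ℝ)
    = if a < N then (1:ℝ) else 0 from hfirst]
  rfl

lemma pairV_add_onev (e h : ℕ) (κ : ℕ → ZMod e) (x : ℕ → ℝ) {i j N : ℕ}
    (hi : i < N) (hj : j < N) :
    pairV e h κ (fun a => (if a < N then (1:ℝ) else 0) + x a) i j = pairV e h κ x i j := by
  simp only [pairV, if_pos hi, if_pos hj]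
  ring

lemma reflV_add_onev (e h : ℕ) (κ : ℕ → ZMod e) (i j : ℕ) (r : ℤ) (x : ℕ → ℝ) {N : ℕ}
    (hi : i < N) (hj : j < N) :
    reflV e h κ i j r (fun a => (if a < N then (1:ℝ) else 0) + x a)
      = fun a => (if a < N then (1:ℝ) else 0) + reflV e h κ i j r x a := by
  funext a
  simp only [reflV, pairV_add_onev e h κ x hi hj]
  ring

lemma add_onev_cancel {f g : ℕ → ℝ} {N : ℕ}
    (hfg : (fun a => (if a < N then (1:ℝ) else 0) + f a)
      = fun a => (if a < N then (1:ℝ) else 0) + g a) : f = g := by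
  funext a
  have := congrFun hfg a
  simpa using this

lemma dval_add_onev (e h N : ℕ) (κ : ℕ → ZMod e) (x y : ℕ → ℝ) {i j : ℕ}
    (hi : i < N) (hj : j < N) (r : ℤ) :
    dval e h κ (fun a => (if a < N then (1:ℝ) else 0) + x a)
      (fun a => (if a < N then (1:ℝ) else 0) + y a) i j r = dval e h κ x y i j r := by
  unfold dval OnWall InLt InGt
  rw [pairV_add_onev e h κ x hi hj, pairV_add_onev e h κ y hi hj]

lemma stepDeg_add_onev (e h ℓ : ℕ) (κ : ℕ → ZMod e) (x y : ℕ → ℝ) :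
    stepDeg e h ℓ κ (fun a => (if a < h * ℓ then (1:ℝ) else 0) + x a)
      (fun a => (if a < h * ℓ then (1:ℝ) else 0) + y a) = stepDeg e h ℓ κ x y := by
  unfold stepDeg
  refine Finset.sum_congr rfl fun i hi => Finset.sum_congr rfl fun j hj => ?_
  simp only [Finset.mem_range] at hi hj
  by_cases hij : i < j
  · rw [if_pos hij, if_pos hij]
    exact finsum_congr fun r => dval_add_onev e h (h * ℓ) κ x y hi hj r
  · rw [if_neg hij, if_neg hij]

lemma stepDeg_prefix_zero {e h ℓ : ℕ} {κ : ℕ → ZMod e} (hh : 1 ≤ h) (hl : 1 ≤ ℓ)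
    (he : h * ℓ < e) (hadm : HAdmissible e h ℓ κ) (hnorm : Normalized e h ℓ κ) (k k' : ℕ) :
    stepDeg e h ℓ κ (fun a => if a < k then (1:ℝ) else 0)
      (fun a => if a < k' then (1:ℝ) else 0) = 0 := by
  unfold stepDeg
  rw [Finset.sum_eq_zero]
  intro i hi
  rw [Finset.sum_eq_zero]
  intro j hj
  simp only [Finset.mem_range] at hi hj
  by_cases hij : i < j
  · rw [if_pos hij]
    rw [finsum_eq_zero_of_forall_eq_zero]
    intro r
    unfold dval
    rw [if_neg, if_neg]
    · rintro ⟨-, hy⟩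
      exact prefix_not_onWall hh hl he hadm hnorm hij hj k' r hy
    · rintro ⟨hx, -⟩
      exact prefix_not_onWall hh hl he hadm hnorm hij hj k r hx
  · rw [if_neg hij]

end Aux6
section Aux7

lemma isPath_detPath {N n : ℕ} {s : ℕ → ℕ} (hs : IsPath N n s) :
    IsPath N (n + N) (detPath N n s) := by
  constructor
  · intro k hk
    simp only [detPath]
    split_ifs with h1 h2
    · omega
    · exact hs.1 _ (by omega)
    · omega
  · intro k hk
    simp only [detPath]
    rw [if_neg (by omega), if_neg (by omega)]

lemma reflStep_det {e h ℓ n : ℕ} {κ : ℕ → ZMod e} {s t : ℕ → ℕ}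
    (hst : ReflStep e h ℓ n κ s t) :
    ReflStep e h ℓ (n + h * ℓ) κ (detPath (h * ℓ) n s) (detPath (h * ℓ) n t) := by
  obtain ⟨hs, ht, k, i, j, r, hk1, hkn, hij, hjN, hwall, hbefore, hafter⟩ := hst
  refine ⟨isPath_detPath hs, isPath_detPath ht, k + h * ℓ, i, j, r, by omega, by omega,
    hij, hjN, ?_, ?_, ?_⟩
  · rw [show k + h * ℓ = h * ℓ + k by omega, pts_detPath_suffix _ _ _ (by omega)]
    unfold OnWall at hwall ⊢
    rw [pairV_add_onev e h κ _ (lt_trans hij hjN) hjN]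
    exact hwall
  · intro l hl2
    by_cases hcase : l ≤ h * ℓ
    · rw [pts_detPath_prefix _ _ _ hcase, pts_detPath_prefix _ _ _ hcase]
    · rw [show l = h * ℓ + (l - h * ℓ) by omega, pts_detPath_suffix _ _ _ (by omega),
        pts_detPath_suffix _ _ _ (by omega), hbefore (l - h * ℓ) (by omega)]
  · intro l hl2 hl3
    rw [show l = h * ℓ + (l - h * ℓ) by omega, pts_detPath_suffix _ _ _ (by omega),
      pts_detPath_suffix _ _ _ (by omega), hafter (l - h * ℓ) (by omega) (by omega)]
    exact (reflV_add_onev e h κ i j r _ (lt_trans hij hjN) hjN).symm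

lemma reflStep_back {e h ℓ n : ℕ} {κ : ℕ → ZMod e} (hh : 1 ≤ h) (hl : 1 ≤ ℓ)
    (he : h * ℓ < e) (hadm : HAdmissible e h ℓ κ) (hnorm : Normalized e h ℓ κ)
    {s t' : ℕ → ℕ} (hs : IsPath (h * ℓ) n s)
    (hstep : ReflStep e h ℓ (n + h * ℓ) κ (detPath (h * ℓ) n s) t') :
    ∃ t, IsPath (h * ℓ) n t ∧ ReflStep e h ℓ n κ s t ∧ t' = detPath (h * ℓ) n t := by
  obtain ⟨hs', ht', k, i, j, r, hk1, hkn, hij, hjN, hwall, hbefore, hafter⟩ := hstep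
  have hkN : h * ℓ < k := by
    by_contra hcon
    refine prefix_not_onWall hh hl he hadm hnorm hij hjN k r ?_
    rwa [pts_detPath_prefix _ _ _ (by omega)] at hwall
  set t : ℕ → ℕ := fun l => if l < n then t' (l + h * ℓ) else 0 with htdef
  have hstepeq : ∀ l, l < k → t' l = detPath (h * ℓ) n s l := fun l hlk =>
    step_eq_of_pts (hbefore l (by omega)) (hbefore (l + 1) (by omega))
  have hist : IsPath (h * ℓ) n t := by
    constructor
    · intro l hln
      simp only [htdef]
      rw [if_pos hln]
      exact ht'.1 (l + h * ℓ) (by omega)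
    · intro l hln
      simp only [htdef]
      rw [if_neg (by omega)]
  have htdet : t' = detPath (h * ℓ) n t := by
    funext l
    by_cases h1 : l < h * ℓ
    · rw [hstepeq l (by omega)]
      simp only [detPath]
      rw [if_pos h1, if_pos h1]
    · by_cases h2 : l < h * ℓ + n
      · simp only [detPath, htdef]
        rw [if_neg h1, if_pos h2, if_pos (by omega)]
        congr 1
        omega
      · simp only [detPath]
        rw [if_neg h1, if_neg h2]
        exact ht'.2 l (by omega)
  rw [htdet] at hbefore hafter
  refine ⟨t, hist, ⟨hs, hist, k - h * ℓ, i, j, r, by omega, by omega, hij, hjN, ?_, ?_, ?_⟩,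
    htdet⟩
  · -- wall
    have := hwall
    rw [show k = h * ℓ + (k - h * ℓ) by omega, pts_detPath_suffix _ _ _ (by omega)] at this
    unfold OnWall at this ⊢
    rwa [pairV_add_onev e h κ _ (lt_trans hij hjN) hjN] at this
  · intro l hl2
    have hb := hbefore (h * ℓ + l) (by omega)
    rw [pts_detPath_suffix _ _ _ (by omega), pts_detPath_suffix _ _ _ (by omega)] at hb
    exact add_onev_cancel hb
  · intro l hl2 hl3
    have hb := hafter (h * ℓ + l) (by omega) (by omega)
    rw [pts_detPath_suffix _ _ _ (by omega), pts_detPath_suffix _ _ _ (by omega),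
      reflV_add_onev e h κ i j r _ (lt_trans hij hjN) hjN] at hb
    exact add_onev_cancel hb

lemma pathSim_back {e h ℓ n : ℕ} {κ : ℕ → ZMod e} (hh : 1 ≤ h) (hl : 1 ≤ ℓ)
    (he : h * ℓ < e) (hadm : HAdmissible e h ℓ κ) (hnorm : Normalized e h ℓ κ)
    {s0 t' : ℕ → ℕ} (hs0 : IsPath (h * ℓ) n s0)
    (hsim : PathSim e h ℓ (n + h * ℓ) κ (detPath (h * ℓ) n s0) t') :
    ∃ t, IsPath (h * ℓ) n t ∧ PathSim e h ℓ n κ s0 t ∧ t' = detPath (h * ℓ) n t := by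
  induction hsim with
  | refl => exact ⟨s0, hs0, Relation.ReflTransGen.refl, rfl⟩
  | tail hab hbc ih =>
    obtain ⟨t, hts, hsim2, rfl⟩ := ih
    obtain ⟨t2, ht2, hstep2, rfl⟩ := reflStep_back hh hl he hadm hnorm hts hbc
    exact ⟨t2, ht2, hsim2.tail hstep2, rfl⟩

lemma isPath_tPath {h ℓ n : ℕ} (μ : MultiPartition ℓ) (hμ : size μ = n) (hμc : HCols h μ) :
    IsPath (h * ℓ) n (tPath h ℓ n μ) := by
  constructor
  · intro k hk
    simp only [tPath]
    rw [if_pos hk]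
    obtain ⟨lamj, hd, hcolsj, hsz, -⟩ := pdiag_struct μ hμc hμ (n - 1 - k) (by omega)
    have hne : (diag lamj).Nonempty := by
      apply Set.nonempty_of_ncard_ne_zero
      rw [← size_eq_ncard]
      omega
    obtain ⟨X, hX⟩ := exists_isLeastRem lamj hne
    have hX' : IsLeastRem ℓ (PDiag ℓ (diag μ) (n - 1 - k)) X := by rwa [hd] at hX
    rw [leastRem_eq hX']
    have hm : X.2.2 < ℓ := comp_lt_of_mem hX.1.1
    have hc : X.2.1 ≤ h := col_le_of_mem hcolsj hX.1.1
    have hc1 : 1 ≤ X.2.1 := hX.1.1.2.1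
    have hmul : h * (X.2.2 + 1) ≤ h * ℓ := Nat.mul_le_mul (le_refl h) (by omega)
    rw [Nat.mul_succ] at hmul
    omega
  · intro k hk
    simp only [tPath]
    rw [if_neg (by omega)]

lemma pathDeg_det {e h ℓ n : ℕ} {κ : ℕ → ZMod e} (hh : 1 ≤ h) (hl : 1 ≤ ℓ)
    (he : h * ℓ < e) (hadm : HAdmissible e h ℓ κ) (hnorm : Normalized e h ℓ κ)
    (s : ℕ → ℕ) :
    pathDeg e h ℓ κ (n + h * ℓ) (detPath (h * ℓ) n s) = pathDeg e h ℓ κ n s := by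
  unfold pathDeg
  rw [show n + h * ℓ = h * ℓ + n by omega, Finset.sum_range_add]
  have hfirst : ∑ k ∈ Finset.range (h * ℓ),
      stepDeg e h ℓ κ (pts (detPath (h * ℓ) n s) k) (pts (detPath (h * ℓ) n s) (k + 1)) = 0 := by
    apply Finset.sum_eq_zero
    intro k hk
    simp only [Finset.mem_range] at hk
    rw [pts_detPath_prefix _ _ _ (by omega), pts_detPath_prefix _ _ _ (by omega)]
    exact stepDeg_prefix_zero hh hl he hadm hnorm k (k + 1)
  rw [hfirst, zero_add]
  refine Finset.sum_congr rfl fun k hk => ?_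
  simp only [Finset.mem_range] at hk
  rw [show h * ℓ + k + 1 = h * ℓ + (k + 1) by omega,
    pts_detPath_suffix _ _ _ (by omega), pts_detPath_suffix _ _ _ (by omega)]
  exact stepDeg_add_onev e h ℓ κ _ _

lemma detPath_inj {N n : ℕ} {s1 s2 : ℕ → ℕ} (h1 : IsPath N n s1) (h2 : IsPath N n s2)
    (heq : detPath N n s1 = detPath N n s2) : s1 = s2 := by
  funext l
  by_cases hln : l < n
  · have := congrFun heq (N + l)
    simp only [detPath] at this
    rw [if_neg (show ¬(N + l < N) by omega), if_pos (show N + l < N + n by omega),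
      if_neg (show ¬(N + l < N) by omega), if_pos (show N + l < N + n by omega)] at this
    simpa using this
  · rw [h1.2 l (by omega), h2.2 l (by omega)]

end Aux7

theorem statement_7 (h ℓ e n : ℕ) (κ : ℕ → ZMod e)
    (hh : 1 ≤ h) (hl : 1 ≤ ℓ) (he : h * ℓ < e)
    (hadm : HAdmissible e h ℓ κ) (hnorm : Normalized e h ℓ κ)
    (μ : MultiPartition ℓ) (hμ : size μ = n) (hμc : HCols h μ) :
    tPath h ℓ (n + h * ℓ) (detMP h μ hμc) = detPath (h * ℓ) n (tPath h ℓ n μ) ∧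
    Set.BijOn (detPath (h * ℓ) n)
      {s : ℕ → ℕ | IsPath (h * ℓ) n s ∧ PathSim e h ℓ n κ (tPath h ℓ n μ) s}
      {s' : ℕ → ℕ | IsPath (h * ℓ) (n + h * ℓ) s' ∧
        PathSim e h ℓ (n + h * ℓ) κ (tPath h ℓ (n + h * ℓ) (detMP h μ hμc)) s'} ∧
    (∀ s : ℕ → ℕ, IsPath (h * ℓ) n s → PathSim e h ℓ n κ (tPath h ℓ n μ) s →
      pts (detPath (h * ℓ) n s) (n + h * ℓ) =
        fun a => (if a < h * ℓ then (1 : ℝ) else 0) + pts s n a) ∧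
    (∀ s : ℕ → ℕ, IsPath (h * ℓ) n s → PathSim e h ℓ n κ (tPath h ℓ n μ) s →
      pathDeg e h ℓ κ (n + h * ℓ) (detPath (h * ℓ) n s) = pathDeg e h ℓ κ n s) := by
  have htdet := tPath_det_eq hh μ hμ hμc
  have htpath := isPath_tPath μ hμ hμc
  refine ⟨htdet, ?_, ?_, ?_⟩
  · rw [htdet]
    refine ⟨?_, ?_, ?_⟩
    · rintro s ⟨hsp, hsim⟩
      exact ⟨isPath_detPath hsp,
        Relation.ReflTransGen.lift (detPath (h * ℓ) n) (fun a b hab => reflStep_det hab) _ _ hsim⟩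
    · rintro s1 ⟨hs1, -⟩ s2 ⟨hs2, -⟩ heq
      exact detPath_inj hs1 hs2 heq
    · rintro s' ⟨hsp', hsim'⟩
      obtain ⟨t, ht, hsim2, rfl⟩ := pathSim_back hh hl he hadm hnorm htpath hsim'
      exact ⟨t, ⟨ht, hsim2⟩, rfl⟩
  · intro s hsp hsim
    rw [show n + h * ℓ = h * ℓ + n by omega]
    exact pts_detPath_suffix (h * ℓ) n s (le_refl n)
  · intro s hsp hsim
    exact pathDeg_det hh hl he hadm hnorm s


end BC
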